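/- arXiv:2602.10752 — 3 statements merged into one kernel-verified Lean document; each statement's English description precedes it below -/
import Mathlib

section
/- Let A be an n×n real matrix and P an n×n real symmetric positive definite matrix with AᵀP + PA negative definite. Then there exists λ > 0 such that every solution x : ℝ → ℝⁿ of x'(t) = A x(t) satisfies, for all t ≥ 0, x(t)ᵀ P x(t) ≤ e^{-λ t} · (x(0)ᵀ P x(0)). In particular the quadratic Lyapunov function V(x) = xᵀPx decays exponentially along trajectories. -/
open Matrix

private lemma quad_smul {n : ℕ} (M : Matrix (Fin n) (Fin n) ℝ) (c : ℝ) (u : Fin n → ℝ) :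
    (c • u) ⬝ᵥ M.mulVec (c • u) = c ^ 2 * (u ⬝ᵥ M.mulVec u) := by
  rw [Matrix.mulVec_smul, dotProduct_smul, smul_dotProduct]
  simp [smul_eq_mul]; ring

private lemma quad_continuous {n : ℕ} (M : Matrix (Fin n) (Fin n) ℝ) :
    Continuous fun v : Fin n → ℝ => v ⬝ᵥ M.mulVec v := by
  simp only [dotProduct, Matrix.mulVec]
  fun_prop

private lemma exists_lam {n : ℕ} (P Q : Matrix (Fin n) (Fin n) ℝ)
    (hP : P.PosDef) (hQ : Q.PosDef) :
    ∃ lam : ℝ, 0 < lam ∧ ∀ v : Fin n → ℝ, lam * (v ⬝ᵥ P.mulVec v) ≤ v ⬝ᵥ Q.mulVec v := by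
  rcases Nat.eq_zero_or_pos n with hn | hn
  · subst hn
    exact ⟨1, one_pos, fun v => by simp [dotProduct]⟩
  · haveI : Nonempty (Fin n) := ⟨⟨0, hn⟩⟩
    have hsne : (Metric.sphere (0 : Fin n → ℝ) 1).Nonempty :=
      NormedSpace.sphere_nonempty.mpr zero_le_one
    have hsc : IsCompact (Metric.sphere (0 : Fin n → ℝ) 1) := isCompact_sphere _ _
    obtain ⟨u₀, hu₀, hmin⟩ := hsc.exists_isMinOn hsne ((quad_continuous Q).continuousOn)
    obtain ⟨u₁, hu₁, hmax⟩ := hsc.exists_isMaxOn hsne ((quad_continuous P).continuousOn)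
    have hu₀ne : u₀ ≠ 0 := by intro h; simp [h] at hu₀
    have hu₁ne : u₁ ≠ 0 := by intro h; simp [h] at hu₁
    have hgmin : 0 < u₀ ⬝ᵥ Q.mulVec u₀ := by simpa using hQ.dotProduct_mulVec_pos hu₀ne
    have hhmax : 0 < u₁ ⬝ᵥ P.mulVec u₁ := by simpa using hP.dotProduct_mulVec_pos hu₁ne
    refine ⟨(u₀ ⬝ᵥ Q.mulVec u₀) / (u₁ ⬝ᵥ P.mulVec u₁), div_pos hgmin hhmax, ?_⟩
    intro v
    rcases eq_or_ne v 0 with rfl | hv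
    · simp
    · have hc0' : 0 < ‖v‖ := norm_pos_iff.2 hv
      obtain ⟨c, hc0, u, hus, hvu⟩ :
          ∃ c : ℝ, 0 < c ∧ ∃ u ∈ Metric.sphere (0 : Fin n → ℝ) 1, v = c • u := by
        refine ⟨‖v‖, hc0', ‖v‖⁻¹ • v, ?_, ?_⟩
        · simp [norm_smul, abs_of_pos (inv_pos.2 hc0'), inv_mul_cancel₀ hc0'.ne']
        · rw [smul_smul, mul_inv_cancel₀ hc0'.ne', one_smul]
      have h1 : u₀ ⬝ᵥ Q.mulVec u₀ ≤ u ⬝ᵥ Q.mulVec u := hmin hus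
      have h2 : u ⬝ᵥ P.mulVec u ≤ u₁ ⬝ᵥ P.mulVec u₁ := hmax hus
      have hune : u ≠ 0 := by intro h; simp [h] at hus
      have hPu : 0 < u ⬝ᵥ P.mulVec u := by simpa using hP.dotProduct_mulVec_pos hune
      have eP : v ⬝ᵥ P.mulVec v = c ^ 2 * (u ⬝ᵥ P.mulVec u) := by
        rw [hvu, quad_smul]
      have eQ : v ⬝ᵥ Q.mulVec v = c ^ 2 * (u ⬝ᵥ Q.mulVec u) := by
        rw [hvu, quad_smul]
      rw [eP, eQ]
      have key : (u₀ ⬝ᵥ Q.mulVec u₀) / (u₁ ⬝ᵥ P.mulVec u₁) * (u ⬝ᵥ P.mulVec u)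
          ≤ u ⬝ᵥ Q.mulVec u := by
        calc (u₀ ⬝ᵥ Q.mulVec u₀) / (u₁ ⬝ᵥ P.mulVec u₁) * (u ⬝ᵥ P.mulVec u)
            ≤ (u₀ ⬝ᵥ Q.mulVec u₀) / (u₁ ⬝ᵥ P.mulVec u₁) * (u₁ ⬝ᵥ P.mulVec u₁) :=
              mul_le_mul_of_nonneg_left h2 (le_of_lt (div_pos hgmin hhmax))
          _ = u₀ ⬝ᵥ Q.mulVec u₀ := div_mul_cancel₀ _ hhmax.ne'
          _ ≤ u ⬝ᵥ Q.mulVec u := h1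
      nlinarith [sq_nonneg c]

private lemma hasDerivAt_quad {n : ℕ} (P : Matrix (Fin n) (Fin n) ℝ)
    (x : ℝ → Fin n → ℝ) (x' : Fin n → ℝ) (t : ℝ) (hx : HasDerivAt x x' t) :
    HasDerivAt (fun s => x s ⬝ᵥ P.mulVec (x s))
      (x' ⬝ᵥ P.mulVec (x t) + x t ⬝ᵥ P.mulVec x') t := by
  have hxi : ∀ i, HasDerivAt (fun s => x s i) (x' i) t := fun i => hasDerivAt_pi.1 hx i
  have key : ∀ i : Fin n, HasDerivAt (fun s => x s i * ∑ j, P i j * x s j)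
      (x' i * (∑ j, P i j * x t j) + x t i * ∑ j, P i j * x' j) t := by
    intro i
    exact (hxi i).mul (HasDerivAt.fun_sum fun j _ => (hxi j).const_mul (P i j))
  have hsum := HasDerivAt.fun_sum (fun i (_ : i ∈ Finset.univ) => key i)
  have hfun : (fun s => x s ⬝ᵥ P.mulVec (x s))
      = fun s => ∑ i, x s i * ∑ j, P i j * x s j := by
    funext s; simp [dotProduct, Matrix.mulVec]
  have hval : x' ⬝ᵥ P.mulVec (x t) + x t ⬝ᵥ P.mulVec x'
      = ∑ i, (x' i * (∑ j, P i j * x t j) + x t i * ∑ j, P i j * x' j) := by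
    simp [dotProduct, Matrix.mulVec, Finset.sum_add_distrib]
  rw [hfun, hval]
  exact hsum

/-- if `P ≻ 0` and `Aᵀ P + P A ≺ 0`, then there is `λ > 0` such that
every solution of `x' = A x` satisfies `x(t)ᵀ P x(t) ≤ exp (-λ t) * (x(0)ᵀ P x(0))`
for all `t ≥ 0`. -/
theorem statement3 (n : ℕ) (A P : Matrix (Fin n) (Fin n) ℝ)
    (hP : P.PosDef) (hLyap : (-((Aᵀ * P) + P * A)).PosDef) :
    ∃ lam : ℝ, 0 < lam ∧
      ∀ x : ℝ → (Fin n → ℝ), (∀ t, HasDerivAt x (A.mulVec (x t)) t) →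
        ∀ t : ℝ, 0 ≤ t →
          x t ⬝ᵥ P.mulVec (x t) ≤ Real.exp (-lam * t) * (x 0 ⬝ᵥ P.mulVec (x 0)) := by
  obtain ⟨lam, hlam, hquad⟩ := exists_lam P _ hP hLyap
  refine ⟨lam, hlam, ?_⟩
  intro x hx t ht
  set V : ℝ → ℝ := fun s => x s ⬝ᵥ P.mulVec (x s) with hV
  have hV' : ∀ s, HasDerivAt V (- (x s ⬝ᵥ (-((Aᵀ * P) + P * A)).mulVec (x s))) s := by
    intro s
    have h := hasDerivAt_quad P x (A.mulVec (x s)) s (hx s)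
    have e1 : x s ⬝ᵥ (Aᵀ * P).mulVec (x s) = A.mulVec (x s) ⬝ᵥ P.mulVec (x s) := by
      rw [← Matrix.mulVec_mulVec, dotProduct_mulVec, vecMul_transpose]
    have e2 : x s ⬝ᵥ (P * A).mulVec (x s) = x s ⬝ᵥ P.mulVec (A.mulVec (x s)) := by
      rw [Matrix.mulVec_mulVec]
    have e3 : - (x s ⬝ᵥ (-((Aᵀ * P) + P * A)).mulVec (x s))
        = A.mulVec (x s) ⬝ᵥ P.mulVec (x s) + x s ⬝ᵥ P.mulVec (A.mulVec (x s)) := by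
      rw [Matrix.neg_mulVec, dotProduct_neg, neg_neg, Matrix.add_mulVec, dotProduct_add,
        e1, e2]
    rw [e3]
    exact h
  set W : ℝ → ℝ := fun s => Real.exp (lam * s) * V s with hW
  have hW' : ∀ s, HasDerivAt W
      (lam * Real.exp (lam * s) * V s + Real.exp (lam * s) *
        (- (x s ⬝ᵥ (-((Aᵀ * P) + P * A)).mulVec (x s)))) s := by
    intro s
    have he : HasDerivAt (fun s => Real.exp (lam * s)) (lam * Real.exp (lam * s)) s := by
      have := (Real.hasDerivAt_exp (lam * s)).comp s ((hasDerivAt_id s).const_mul lam)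
      rw [show (fun s => Real.exp (lam * s)) = Real.exp ∘ HMul.hMul lam from rfl,
        show lam * Real.exp (lam * s) = Real.exp (lam * s) * (lam * 1) by ring]
      exact this
    exact he.mul (hV' s)
  have hWanti : Antitone W := by
    apply antitone_of_deriv_nonpos
    · exact fun s => (hW' s).differentiableAt
    · intro s
      rw [(hW' s).deriv]
      have h1 : lam * V s ≤ x s ⬝ᵥ (-((Aᵀ * P) + P * A)).mulVec (x s) := hquad (x s)
      have h2 : (0:ℝ) < Real.exp (lam * s) := Real.exp_pos _
      nlinarith [h2]
  have hWt : W t ≤ W 0 := hWanti ht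
  have h0 : W 0 = V 0 := by simp [hW]
  rw [h0] at hWt
  have hexp : (0:ℝ) < Real.exp (-lam * t) := Real.exp_pos _
  have hmul : Real.exp (-lam * t) * W t ≤ Real.exp (-lam * t) * V 0 :=
    mul_le_mul_of_nonneg_left hWt hexp.le
  have hWtV : Real.exp (-lam * t) * W t = V t := by
    show Real.exp (-lam * t) * (Real.exp (lam * t) * V t) = V t
    rw [← mul_assoc, ← Real.exp_add]
    have : -lam * t + lam * t = 0 := by ring
    rw [this, Real.exp_zero, one_mul]
  calc V t = Real.exp (-lam * t) * W t := hWtV.symm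
    _ ≤ Real.exp (-lam * t) * V 0 := hmul
end

section
/- Let A be an n×n, B an n×m, and C_z an r×n real matrix, let P be an n×n real symmetric positive semidefinite matrix and γ > 0 a real number, and suppose that for all x ∈ ℝⁿ and u ∈ ℝᵐ, xᵀ(AᵀP + PA + C_zᵀC_z)x + 2 xᵀ P B u − γ uᵀu ≤ 0. Let x : ℝ → ℝⁿ be differentiable and u : ℝ → ℝᵐ continuous with x'(t) = A x(t) + B u(t) for all t and x(0) = 0. Then for every T ≥ 0, ∫₀ᵀ ‖C_z x(t)‖² dt ≤ γ ∫₀ᵀ ‖u(t)‖² dt. In particular the L₂-gain from u to the performance output z = C_z x is at most √γ. -/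
open Matrix intervalIntegral

lemma statement7_dm' {k l : ℕ} (M : Matrix (Fin k) (Fin l) ℝ) (v : Fin l → ℝ) (w : Fin k → ℝ) :
    M.mulVec v ⬝ᵥ w = v ⬝ᵥ Mᵀ.mulVec w := by
  rw [Matrix.dotProduct_mulVec, Matrix.vecMul_transpose]

lemma statement7_normsq {k : ℕ} (v : Fin k → ℝ) :
    ‖(EuclideanSpace.equiv (Fin k) ℝ).symm v‖ ^ 2 = v ⬝ᵥ v := by
  rw [EuclideanSpace.norm_eq, Real.sq_sqrt (by positivity)]
  simp [dotProduct, sq]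

/-- the Bounded Real Lemma quadratic-form inequality (with `P ⪰ 0`)
implies the finite-horizon `L₂`-gain bound
`∫₀ᵀ ‖C_z x(t)‖² dt ≤ γ ∫₀ᵀ ‖u(t)‖² dt` along trajectories of `x' = A x + B u`
starting at `x(0) = 0`. -/
theorem statement7 (n m r : ℕ)
    (A : Matrix (Fin n) (Fin n) ℝ) (B : Matrix (Fin n) (Fin m) ℝ)
    (Cz : Matrix (Fin r) (Fin n) ℝ)
    (P : Matrix (Fin n) (Fin n) ℝ) (hP : P.PosSemidef) (γ : ℝ) (hγ : 0 < γ)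
    (hLMI : ∀ (x : Fin n → ℝ) (u : Fin m → ℝ),
      x ⬝ᵥ ((Aᵀ * P + P * A + Czᵀ * Cz).mulVec x)
        + 2 * (x ⬝ᵥ ((P * B).mulVec u)) - γ * (u ⬝ᵥ u) ≤ 0)
    (x : ℝ → (Fin n → ℝ)) (u : ℝ → (Fin m → ℝ))
    (hx : ∀ t, HasDerivAt x (A.mulVec (x t) + B.mulVec (u t)) t)
    (hu : Continuous u) (hx0 : x 0 = 0) :
    ∀ T : ℝ, 0 ≤ T →
      ∫ t in (0:ℝ)..T, ‖(EuclideanSpace.equiv (Fin r) ℝ).symm (Cz.mulVec (x t))‖ ^ 2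
        ≤ γ * ∫ t in (0:ℝ)..T, ‖(EuclideanSpace.equiv (Fin m) ℝ).symm (u t)‖ ^ 2 := by
  intro T hT
  have hPsymm : Pᵀ = P := by simpa [Matrix.IsSymm] using hP.1
  set x' : ℝ → Fin n → ℝ := fun t => A.mulVec (x t) + B.mulVec (u t) with hx'def
  have hxc : Continuous x := by
    rw [continuous_iff_continuousAt]; exact fun t => (hx t).continuousAt
  have hx'c : Continuous x' :=
    (continuous_const.matrix_mulVec hxc).add (continuous_const.matrix_mulVec hu)
  set V : ℝ → ℝ := fun t => x t ⬝ᵥ P.mulVec (x t) with hVdef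
  set V' : ℝ → ℝ := fun t => x' t ⬝ᵥ P.mulVec (x t) + x t ⬝ᵥ P.mulVec (x' t) with hV'def
  have hVd : ∀ t, HasDerivAt V (V' t) t := by
    intro t
    have hcomp : ∀ i : Fin n, HasDerivAt (fun s => x s i) (x' t i) t := fun i =>
      (ContinuousLinearMap.proj i : (Fin n → ℝ) →L[ℝ] ℝ).hasFDerivAt.comp_hasDerivAt t (hx t)
    have hsum : HasDerivAt (fun s => ∑ i, x s i * ∑ j, P i j * x s j)
        (∑ i, (x' t i * ∑ j, P i j * x t j + x t i * ∑ j, P i j * x' t j)) t := by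
      refine HasDerivAt.fun_sum fun i _ => ?_
      exact (hcomp i).mul (HasDerivAt.fun_sum fun j _ => (hcomp j).const_mul (P i j))
    have e1 : V = fun s => ∑ i, x s i * ∑ j, P i j * x s j := by
      funext s; simp [hVdef, dotProduct, Matrix.mulVec]
    have e2 : V' t = ∑ i, (x' t i * ∑ j, P i j * x t j + x t i * ∑ j, P i j * x' t j) := by
      simp [hV'def, dotProduct, Matrix.mulVec, Finset.sum_add_distrib]
    rw [e1, e2]; exact hsum
  have hV'c : Continuous V' :=
    (hx'c.dotProduct (continuous_const.matrix_mulVec hxc)).add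
      (hxc.dotProduct (continuous_const.matrix_mulVec hx'c))
  have hpt : ∀ t, Cz.mulVec (x t) ⬝ᵥ Cz.mulVec (x t) ≤ γ * (u t ⬝ᵥ u t) - V' t := by
    intro t
    have h := hLMI (x t) (u t)
    have halg : V' t + Cz.mulVec (x t) ⬝ᵥ Cz.mulVec (x t)
        = x t ⬝ᵥ ((Aᵀ * P + P * A + Czᵀ * Cz).mulVec (x t))
          + 2 * (x t ⬝ᵥ ((P * B).mulVec (u t))) := by
      simp only [hV'def, hx'def, Matrix.mulVec_add, dotProduct_add,
        add_dotProduct, statement7_dm', Matrix.mulVec_mulVec, Matrix.add_mulVec]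
      rw [dotProduct_comm (u t), statement7_dm', Matrix.transpose_mul,
        Matrix.transpose_transpose, hPsymm]
      ring
    linarith
  have hintz : Continuous fun t => Cz.mulVec (x t) ⬝ᵥ Cz.mulVec (x t) :=
    (continuous_const.matrix_mulVec hxc).dotProduct (continuous_const.matrix_mulVec hxc)
  have hintu : Continuous fun t => u t ⬝ᵥ u t := hu.dotProduct hu
  have hFTC : ∫ t in (0:ℝ)..T, V' t = V T - V 0 :=
    intervalIntegral.integral_eq_sub_of_hasDerivAt (fun t _ => hVd t)
      (hV'c.intervalIntegrable 0 T)
  have hmono : ∫ t in (0:ℝ)..T, Cz.mulVec (x t) ⬝ᵥ Cz.mulVec (x t)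
      ≤ ∫ t in (0:ℝ)..T, (γ * (u t ⬝ᵥ u t) - V' t) :=
    intervalIntegral.integral_mono_on hT (hintz.intervalIntegrable 0 T)
      (((continuous_const.mul hintu).sub hV'c).intervalIntegrable 0 T) (fun t _ => hpt t)
  rw [intervalIntegral.integral_sub (f := fun t => γ * (u t ⬝ᵥ u t)) ((continuous_const.mul hintu).intervalIntegrable 0 T)
      (hV'c.intervalIntegrable 0 T), hFTC, intervalIntegral.integral_const_mul] at hmono
  have hV0 : V 0 = 0 := by simp [hVdef, hx0]
  have hVT : 0 ≤ V T := by simpa using hP.dotProduct_mulVec_nonneg (x T)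
  simp only [statement7_normsq]
  linarith
end

section
/- For k = 1,…,N let A⁽ᵏ⁾ be n×n, B⁽ᵏ⁾ be n×m, and C_z⁽ᵏ⁾ be r×n real matrices. Suppose there exist an n×n real symmetric positive definite matrix P and a real γ > 0 such that for every k the block matrix [[(A⁽ᵏ⁾)ᵀP + PA⁽ᵏ⁾ + (C_z⁽ᵏ⁾)ᵀC_z⁽ᵏ⁾, PB⁽ᵏ⁾], [(B⁽ᵏ⁾)ᵀP, −γI]] is negative semidefinite. Then for any nonnegative reals α₁,…,α_N with Σₖ αₖ = 1, writing A := Σₖ αₖ A⁽ᵏ⁾, B := Σₖ αₖ B⁽ᵏ⁾, C_z := Σₖ αₖ C_z⁽ᵏ⁾, every differentiable x : ℝ → ℝⁿ and continuous u : ℝ → ℝᵐ with x'(t) = A x(t) + B u(t) and x(0) = 0 satisfy ∫₀ᵀ ‖C_z x(t)‖² dt ≤ γ ∫₀ᵀ ‖u(t)‖² dt for every T ≥ 0. -/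
open Matrix Finset intervalIntegral

lemma brl_nsq (p : ℕ) (v : Fin p → ℝ) :
    ‖(EuclideanSpace.equiv (Fin p) ℝ).symm v‖ ^ 2 = v ⬝ᵥ v := by
  rw [EuclideanSpace.norm_eq, Real.sq_sqrt (by positivity)]
  simp [dotProduct, sq_abs, pow_two]

lemma brl_dot_cont {p : ℕ} {f g : ℝ → Fin p → ℝ} (hf : Continuous f) (hg : Continuous g) :
    Continuous fun t => f t ⬝ᵥ g t := by
  unfold dotProduct
  exact continuous_finset_sum _ fun i _ =>
    ((continuous_apply i).comp hf).mul ((continuous_apply i).comp hg)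

lemma brl_mv_cont {p q : ℕ} (M : Matrix (Fin p) (Fin q) ℝ) {f : ℝ → Fin q → ℝ}
    (hf : Continuous f) : Continuous fun t => M *ᵥ f t := by
  have h : Continuous M.mulVecLin := M.mulVecLin.continuous_of_finiteDimensional
  exact h.comp hf

lemma brl_sum_mulVec {p q N : ℕ} (M : Fin N → Matrix (Fin p) (Fin q) ℝ) (α : Fin N → ℝ)
    (v : Fin q → ℝ) : (∑ k, α k • M k) *ᵥ v = ∑ k, α k • (M k *ᵥ v) := by
  ext i
  simp [mulVec, dotProduct, Matrix.sum_apply, Finset.sum_apply, Finset.sum_mul, Finset.mul_sum]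
  rw [Finset.sum_comm]
  exact Finset.sum_congr rfl fun k _ => Finset.sum_congr rfl fun j _ => by ring

lemma brl_mulVec_sum {p q N : ℕ} (P : Matrix (Fin p) (Fin q) ℝ) (w : Fin N → Fin q → ℝ) :
    P *ᵥ (∑ k, w k) = ∑ k, P *ᵥ (w k) := by
  have := map_sum P.mulVecLin w univ
  simpa only [Matrix.mulVecLin_apply] using this

lemma brl_sum_dot {p N : ℕ} (v : Fin N → Fin p → ℝ) (w : Fin p → ℝ) :
    (∑ k, v k) ⬝ᵥ w = ∑ k, v k ⬝ᵥ w := by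
  simp [dotProduct, Finset.sum_apply, Finset.sum_mul]
  rw [Finset.sum_comm]

lemma brl_dot_sum {p N : ℕ} (v : Fin N → Fin p → ℝ) (w : Fin p → ℝ) :
    w ⬝ᵥ (∑ k, v k) = ∑ k, w ⬝ᵥ v k := by
  simp [dotProduct, Finset.sum_apply, Finset.mul_sum]
  rw [Finset.sum_comm]

lemma brl_vertex {n m r : ℕ} {A : Matrix (Fin n) (Fin n) ℝ} {B : Matrix (Fin n) (Fin m) ℝ}
    {C : Matrix (Fin r) (Fin n) ℝ} {P : Matrix (Fin n) (Fin n) ℝ} {γ : ℝ}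
    (h : (-(Matrix.fromBlocks (Aᵀ * P + P * A + Cᵀ * C) (P * B)
          (Bᵀ * P) (-(γ • (1 : Matrix (Fin m) (Fin m) ℝ))))).PosSemidef)
    (xv : Fin n → ℝ) (uv : Fin m → ℝ) :
    (A *ᵥ xv) ⬝ᵥ (P *ᵥ xv) + xv ⬝ᵥ (P *ᵥ (A *ᵥ xv)) + (C *ᵥ xv) ⬝ᵥ (C *ᵥ xv)
      + xv ⬝ᵥ (P *ᵥ (B *ᵥ uv)) + (B *ᵥ uv) ⬝ᵥ (P *ᵥ xv) ≤ γ * (uv ⬝ᵥ uv) := by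
  have h2 := h.dotProduct_mulVec_nonneg (Sum.elim xv uv)
  simp only [star_trivial, neg_mulVec, fromBlocks_mulVec, dotProduct_neg,
    Sum.elim_comp_inl, Sum.elim_comp_inr, add_mulVec, ← mulVec_mulVec,
    sumElim_dotProduct_sumElim, dotProduct_add, neg_add_rev, neg_neg,
    smul_mulVec, one_mulVec, dotProduct_smul, smul_eq_mul] at h2
  have e1 : xv ⬝ᵥ (Aᵀ *ᵥ (P *ᵥ xv)) = (A *ᵥ xv) ⬝ᵥ (P *ᵥ xv) := by
    rw [mulVec_transpose, dotProduct_mulVec, dotProduct_comm, ← dotProduct_mulVec,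
      dotProduct_comm, dotProduct_mulVec]
  have e2 : xv ⬝ᵥ (Cᵀ *ᵥ (C *ᵥ xv)) = (C *ᵥ xv) ⬝ᵥ (C *ᵥ xv) := by
    rw [mulVec_transpose, dotProduct_mulVec, dotProduct_comm, ← dotProduct_mulVec, dotProduct_comm]
  have e3 : uv ⬝ᵥ (Bᵀ *ᵥ (P *ᵥ xv)) = (B *ᵥ uv) ⬝ᵥ (P *ᵥ xv) := by
    rw [mulVec_transpose, dotProduct_mulVec, dotProduct_comm, ← dotProduct_mulVec,
      dotProduct_comm, dotProduct_mulVec]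
  rw [e1, e2, e3] at h2
  linarith

lemma brl_hasDerivAt_quad {n : ℕ} (P : Matrix (Fin n) (Fin n) ℝ)
    {x : ℝ → Fin n → ℝ} {x' : Fin n → ℝ} {t : ℝ} (hx : HasDerivAt x x' t) :
    HasDerivAt (fun s => x s ⬝ᵥ (P *ᵥ x s)) (x' ⬝ᵥ (P *ᵥ x t) + x t ⬝ᵥ (P *ᵥ x')) t := by
  have hxi : ∀ i, HasDerivAt (fun s => x s i) (x' i) t := fun i => hasDerivAt_pi.mp hx i
  have key : HasDerivAt (fun s => ∑ i, ∑ j, x s i * (P i j * x s j))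
      (∑ i, ∑ j, (x' i * (P i j * x t j) + x t i * (P i j * x' j))) t :=
    HasDerivAt.fun_sum fun i _ => HasDerivAt.fun_sum fun j _ =>
      ((hxi i).mul ((hxi j).const_mul (P i j)))
  have e1 : (fun s => ∑ i, ∑ j, x s i * (P i j * x s j)) = fun s => x s ⬝ᵥ (P *ᵥ x s) := by
    ext s; simp [dotProduct, mulVec, Finset.mul_sum]
  have e2 : (∑ i, ∑ j, (x' i * (P i j * x t j) + x t i * (P i j * x' j)))
      = x' ⬝ᵥ (P *ᵥ x t) + x t ⬝ᵥ (P *ᵥ x') := by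
    simp [dotProduct, mulVec, Finset.mul_sum, Finset.sum_add_distrib]
  rw [← e1, ← e2]; exact key

/-- Lemma 2, polytopic Bounded Real Lemma: if the block LMI
`[[(A k)ᵀP + P(A k) + (C k)ᵀ(C k), P (B k)], [(B k)ᵀ P, -γ I]] ⪯ 0` holds at every
vertex `k`, then for every convex combination `(A, B, C_z)` of the vertices, every
trajectory of `x' = A x + B u` with `x(0) = 0` satisfies the finite-horizon
`L₂`-gain bound `∫₀ᵀ ‖C_z x(t)‖² dt ≤ γ ∫₀ᵀ ‖u(t)‖² dt`. -/
theorem statement9 (n m r N : ℕ)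
    (A : Fin N → Matrix (Fin n) (Fin n) ℝ) (B : Fin N → Matrix (Fin n) (Fin m) ℝ)
    (Cz : Fin N → Matrix (Fin r) (Fin n) ℝ)
    (P : Matrix (Fin n) (Fin n) ℝ) (hP : P.PosDef) (γ : ℝ) (hγ : 0 < γ)
    (hLMI : ∀ k,
      (-(Matrix.fromBlocks
          ((A k)ᵀ * P + P * A k + (Cz k)ᵀ * Cz k) (P * B k)
          ((B k)ᵀ * P) (-(γ • (1 : Matrix (Fin m) (Fin m) ℝ))))).PosSemidef)
    (α : Fin N → ℝ) (hα : ∀ k, 0 ≤ α k) (hsum : ∑ k, α k = 1)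
    (x : ℝ → (Fin n → ℝ)) (u : ℝ → (Fin m → ℝ))
    (hx : ∀ t, HasDerivAt x
      ((∑ k, α k • A k).mulVec (x t) + (∑ k, α k • B k).mulVec (u t)) t)
    (hu : Continuous u) (hx0 : x 0 = 0) :
    ∀ T : ℝ, 0 ≤ T →
      ∫ t in (0:ℝ)..T,
          ‖(EuclideanSpace.equiv (Fin r) ℝ).symm ((∑ k, α k • Cz k).mulVec (x t))‖ ^ 2
        ≤ γ * ∫ t in (0:ℝ)..T, ‖(EuclideanSpace.equiv (Fin m) ℝ).symm (u t)‖ ^ 2 := by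
  intro T hT
  set A' := ∑ k, α k • A k with hA'
  set B' := ∑ k, α k • B k with hB'
  set C' := ∑ k, α k • Cz k with hC'
  set xd : ℝ → Fin n → ℝ := fun t => A' *ᵥ x t + B' *ᵥ u t with hxd
  -- pointwise inequality
  have hpt : ∀ t, xd t ⬝ᵥ (P *ᵥ x t) + x t ⬝ᵥ (P *ᵥ xd t)
      + (C' *ᵥ x t) ⬝ᵥ (C' *ᵥ x t) ≤ γ * (u t ⬝ᵥ u t) := by
    intro t
    set xt := x t
    set ut := u t
    have hk : ∀ k, (A k *ᵥ xt) ⬝ᵥ (P *ᵥ xt) + xt ⬝ᵥ (P *ᵥ (A k *ᵥ xt))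
        + (Cz k *ᵥ xt) ⬝ᵥ (Cz k *ᵥ xt) + xt ⬝ᵥ (P *ᵥ (B k *ᵥ ut))
        + (B k *ᵥ ut) ⬝ᵥ (P *ᵥ xt) ≤ γ * (ut ⬝ᵥ ut) :=
      fun k => brl_vertex (hLMI k) xt ut
    have hsumk : ∑ k, α k * ((A k *ᵥ xt) ⬝ᵥ (P *ᵥ xt) + xt ⬝ᵥ (P *ᵥ (A k *ᵥ xt))
        + (Cz k *ᵥ xt) ⬝ᵥ (Cz k *ᵥ xt) + xt ⬝ᵥ (P *ᵥ (B k *ᵥ ut))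
        + (B k *ᵥ ut) ⬝ᵥ (P *ᵥ xt)) ≤ γ * (ut ⬝ᵥ ut) := by
      calc ∑ k, α k * ((A k *ᵥ xt) ⬝ᵥ (P *ᵥ xt) + xt ⬝ᵥ (P *ᵥ (A k *ᵥ xt))
            + (Cz k *ᵥ xt) ⬝ᵥ (Cz k *ᵥ xt) + xt ⬝ᵥ (P *ᵥ (B k *ᵥ ut))
            + (B k *ᵥ ut) ⬝ᵥ (P *ᵥ xt))
          ≤ ∑ k, α k * (γ * (ut ⬝ᵥ ut)) :=
            Finset.sum_le_sum fun k _ => mul_le_mul_of_nonneg_left (hk k) (hα k)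
        _ = γ * (ut ⬝ᵥ ut) := by rw [← Finset.sum_mul, hsum, one_mul]
    have expand1 : xd t ⬝ᵥ (P *ᵥ xt) + xt ⬝ᵥ (P *ᵥ xd t)
        = ∑ k, α k * ((A k *ᵥ xt) ⬝ᵥ (P *ᵥ xt) + xt ⬝ᵥ (P *ᵥ (A k *ᵥ xt))
          + xt ⬝ᵥ (P *ᵥ (B k *ᵥ ut)) + (B k *ᵥ ut) ⬝ᵥ (P *ᵥ xt)) := by
      simp only [hxd, hA', hB', brl_sum_mulVec, ← Finset.sum_add_distrib,
        brl_mulVec_sum, brl_sum_dot, brl_dot_sum, mulVec_smul, mulVec_add,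
        add_dotProduct, dotProduct_add, smul_dotProduct, dotProduct_smul,
        smul_eq_mul]
      exact Finset.sum_congr rfl fun k _ => by ring
    have hjensen : (C' *ᵥ xt) ⬝ᵥ (C' *ᵥ xt)
        ≤ ∑ k, α k * ((Cz k *ᵥ xt) ⬝ᵥ (Cz k *ᵥ xt)) := by
      set w : Fin N → EuclideanSpace ℝ (Fin r) :=
        fun k => (EuclideanSpace.equiv (Fin r) ℝ).symm (Cz k *ᵥ xt) with hw
      have hv : (EuclideanSpace.equiv (Fin r) ℝ).symm (C' *ᵥ xt) = ∑ k, α k • w k := by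
        rw [hC', brl_sum_mulVec, map_sum]
        exact Finset.sum_congr rfl fun k _ => map_smul _ _ _
      have h1 : (C' *ᵥ xt) ⬝ᵥ (C' *ᵥ xt) = ‖∑ k, α k • w k‖ ^ 2 := by
        rw [← brl_nsq, hv]
      have h2 : ‖∑ k, α k • w k‖ ≤ ∑ k, α k * ‖w k‖ := by
        refine (norm_sum_le _ _).trans (le_of_eq ?_)
        exact Finset.sum_congr rfl fun k _ => by
          rw [norm_smul, Real.norm_eq_abs, abs_of_nonneg (hα k)]
      have h3 : (∑ k, α k * ‖w k‖) ^ 2 ≤ ∑ k, α k * ‖w k‖ ^ 2 := by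
        have hc : ConvexOn ℝ Set.univ fun s : ℝ => s ^ 2 := Even.convexOn_pow even_two
        simpa [smul_eq_mul] using
          hc.map_sum_le (t := univ) (w := α) (p := fun k => ‖w k‖)
            (fun k _ => hα k) hsum (fun k _ => Set.mem_univ _)
      have h4 : ‖∑ k, α k • w k‖ ^ 2 ≤ (∑ k, α k * ‖w k‖) ^ 2 :=
        pow_le_pow_left₀ (norm_nonneg _) h2 2
      rw [h1]
      refine (h4.trans h3).trans (le_of_eq ?_)
      exact Finset.sum_congr rfl fun k _ => by rw [brl_nsq]
    have split : ∑ k, α k * ((A k *ᵥ xt) ⬝ᵥ (P *ᵥ xt) + xt ⬝ᵥ (P *ᵥ (A k *ᵥ xt))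
          + (Cz k *ᵥ xt) ⬝ᵥ (Cz k *ᵥ xt) + xt ⬝ᵥ (P *ᵥ (B k *ᵥ ut))
          + (B k *ᵥ ut) ⬝ᵥ (P *ᵥ xt))
        = (∑ k, α k * ((A k *ᵥ xt) ⬝ᵥ (P *ᵥ xt) + xt ⬝ᵥ (P *ᵥ (A k *ᵥ xt))
          + xt ⬝ᵥ (P *ᵥ (B k *ᵥ ut)) + (B k *ᵥ ut) ⬝ᵥ (P *ᵥ xt)))
          + ∑ k, α k * ((Cz k *ᵥ xt) ⬝ᵥ (Cz k *ᵥ xt)) := by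
      rw [← Finset.sum_add_distrib]
      exact Finset.sum_congr rfl fun k _ => by ring
    linarith
  -- continuity
  have hxc : Continuous x := by
    rw [continuous_iff_continuousAt]; exact fun t => (hx t).continuousAt
  have hxdc : Continuous xd := (brl_mv_cont A' hxc).add (brl_mv_cont B' hu)
  have hDc : Continuous fun t => xd t ⬝ᵥ (P *ᵥ x t) + x t ⬝ᵥ (P *ᵥ xd t) :=
    (brl_dot_cont hxdc (brl_mv_cont P hxc)).add (brl_dot_cont hxc (brl_mv_cont P hxdc))
  have hCc : Continuous fun t => (C' *ᵥ x t) ⬝ᵥ (C' *ᵥ x t) :=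
    brl_dot_cont (brl_mv_cont C' hxc) (brl_mv_cont C' hxc)
  have hUc : Continuous fun t => u t ⬝ᵥ u t := brl_dot_cont hu hu
  -- FTC
  have hftc : ∫ t in (0:ℝ)..T, (xd t ⬝ᵥ (P *ᵥ x t) + x t ⬝ᵥ (P *ᵥ xd t))
      = x T ⬝ᵥ (P *ᵥ x T) - x 0 ⬝ᵥ (P *ᵥ x 0) := by
    refine intervalIntegral.integral_eq_sub_of_hasDerivAt
      (f := fun t => x t ⬝ᵥ (P *ᵥ x t)) (fun t _ => ?_)
      (hDc.intervalIntegrable 0 T)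
    exact brl_hasDerivAt_quad P (hx t)
  have hV0 : x 0 ⬝ᵥ (P *ᵥ x 0) = 0 := by simp [hx0]
  have hVT : 0 ≤ x T ⬝ᵥ (P *ᵥ x T) := by simpa using hP.posSemidef.dotProduct_mulVec_nonneg (x T)
  -- integral comparison
  simp only [brl_nsq]
  have mono : ∫ t in (0:ℝ)..T, (C' *ᵥ x t) ⬝ᵥ (C' *ᵥ x t)
      ≤ ∫ t in (0:ℝ)..T,
          (γ * (u t ⬝ᵥ u t) - (xd t ⬝ᵥ (P *ᵥ x t) + x t ⬝ᵥ (P *ᵥ xd t))) := by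
    refine intervalIntegral.integral_mono_on hT (hCc.intervalIntegrable 0 T)
      (((continuous_const.mul hUc).sub hDc).intervalIntegrable 0 T) (fun t _ => ?_)
    have := hpt t
    linarith
  have hsplit : ∫ t in (0:ℝ)..T,
        (γ * (u t ⬝ᵥ u t) - (xd t ⬝ᵥ (P *ᵥ x t) + x t ⬝ᵥ (P *ᵥ xd t)))
      = γ * (∫ t in (0:ℝ)..T, u t ⬝ᵥ u t)
        - ∫ t in (0:ℝ)..T, (xd t ⬝ᵥ (P *ᵥ x t) + x t ⬝ᵥ (P *ᵥ xd t)) := by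
    rw [intervalIntegral.integral_sub (f := fun t => γ * (u t ⬝ᵥ u t)) ((continuous_const.mul hUc).intervalIntegrable 0 T)
      (hDc.intervalIntegrable 0 T), intervalIntegral.integral_const_mul]
  rw [hsplit, hftc, hV0, sub_zero] at mono
  linarith
end
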